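/- Let c > 0 and let g : X → ℝ be convex, differentiable, and strictly positive on an open convex set X ⊆ ℝⁿ. Then f(x) = g(x)/(g(x) + c) is invex with kernel η(x,y) = ((g(x)+c)/(g(y)+c))²·(y - x); that is, f(y) - f(x) ≥ ⟨∇f(x), η(x,y)⟩ for all x, y ∈ X. -/

import Mathlib

open RealInnerProductSpace

open Filter Set Topology in
lemma fderiv_le_sub_of_convexOn {n : ℕ} {X : Set (EuclideanSpace ℝ (Fin n))}
    {g : EuclideanSpace ℝ (Fin n) → ℝ} (hgconv : ConvexOn ℝ X g)
    {x y : EuclideanSpace ℝ (Fin n)} (hx : x ∈ X) (hy : y ∈ X)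
    (hd : DifferentiableAt ℝ g x) :
    fderiv ℝ g x (y - x) ≤ g y - g x := by
  set φ : ℝ → ℝ := fun t => g (x + t • (y - x)) with hφdef
  have hline : HasDerivAt (fun t : ℝ => x + t • (y - x)) (y - x) 0 := by
    simpa using ((hasDerivAt_id (0 : ℝ)).smul_const (y - x)).const_add x
  have hφ : HasDerivAt φ (fderiv ℝ g x (y - x)) 0 := by
    have h0 : (fun t : ℝ => x + t • (y - x)) 0 = x := by simp
    have hd' : HasFDerivAt g (fderiv ℝ g x) ((fun t : ℝ => x + t • (y - x)) 0) := by
      rw [h0]; exact hd.hasFDerivAt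
    exact hd'.comp_hasDerivAt 0 hline
  have hslope : Tendsto (slope φ 0) (𝓝[>] 0) (𝓝 (fderiv ℝ g x (y - x))) :=
    (hasDerivAt_iff_tendsto_slope.mp hφ).mono_left
      (nhdsWithin_mono _ (fun t ht => ne_of_gt ht))
  refine le_of_tendsto hslope ?_
  filter_upwards [Ioo_mem_nhdsGT_of_mem (by constructor <;> norm_num : (0:ℝ) ∈ Ico 0 1)]
    with t ht
  have ht0 : 0 < t := ht.1
  have ht1 : t < 1 := ht.2
  have hconv : g (x + t • (y - x)) ≤ (1 - t) * g x + t * g y := by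
    have heq : x + t • (y - x) = (1 - t) • x + t • y := by
      simp [smul_sub, sub_smul]; abel
    rw [heq]
    exact hgconv.2 hx hy (by linarith) (le_of_lt ht0) (by ring)
  have hφ0 : φ 0 = g x := by simp [hφdef]
  rw [slope_def_field, sub_zero]
  have hnum : φ t - φ 0 ≤ t * (g y - g x) := by
    rw [hφ0]; simp only [hφdef]; nlinarith [hconv]
  calc (φ t - φ 0) / t ≤ t * (g y - g x) / t :=
        by apply div_le_div_of_nonneg_right hnum ht0.le
    _ = g y - g x := by field_simp

/-- `f = g/(g+c)` with `c > 0` and `g` convex positive is invex with kernel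
`η(x,y) = ((g(x)+c)/(g(y)+c))²·(y-x)`. -/
theorem invex_frac_of_convex {n : ℕ} (c : ℝ) (hc : 0 < c)
    (X : Set (EuclideanSpace ℝ (Fin n))) (hX : IsOpen X) (hXc : Convex ℝ X) (hXne : X.Nonempty)
    (g : EuclideanSpace ℝ (Fin n) → ℝ)
    (hgconv : ConvexOn ℝ X g) (hgdiff : ∀ x ∈ X, DifferentiableAt ℝ g x)
    (hgpos : ∀ x ∈ X, 0 < g x) :
    ∀ x ∈ X, ∀ y ∈ X,
      g y / (g y + c) - g x / (g x + c) ≥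
        ⟪gradient (fun z => g z / (g z + c)) x,
          (((g x + c) / (g y + c)) ^ 2) • (y - x)⟫ := by
  intro x hx y hy
  have ha : 0 < g x + c := by linarith [hgpos x hx]
  have hb : 0 < g y + c := by linarith [hgpos y hy]
  have hφ : HasDerivAt (fun t : ℝ => t / (t + c)) (c / (g x + c) ^ 2) (g x) := by
    have := (hasDerivAt_id (g x)).div ((hasDerivAt_id (g x)).add_const c) (ne_of_gt ha)
    exact this.congr_deriv (by dsimp only [id]; ring)
  have hgd := hgdiff x hx
  have hF : HasFDerivAt (fun z => g z / (g z + c))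
      ((c / (g x + c) ^ 2) • fderiv ℝ g x) x :=
    hφ.comp_hasFDerivAt x hgd.hasFDerivAt
  have hgrad : gradient (fun z => g z / (g z + c)) x =
      (InnerProductSpace.toDual ℝ _).symm ((c / (g x + c) ^ 2) • fderiv ℝ g x) := by
    rw [gradient, hF.fderiv]
  rw [hgrad, InnerProductSpace.toDual_symm_apply]
  simp only [ContinuousLinearMap.smul_apply, map_smul, smul_eq_mul]
  have hD : fderiv ℝ g x (y - x) ≤ g y - g x :=
    fderiv_le_sub_of_convexOn hgconv hx hy hgd
  set D := fderiv ℝ g x (y - x) with hDdef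
  have h1 : c / (g x + c) ^ 2 * ((g x + c) / (g y + c)) ^ 2 = c / (g y + c) ^ 2 := by
    field_simp
  have hstep : c / (g x + c) ^ 2 * (((g x + c) / (g y + c)) ^ 2 * D)
      ≤ c / (g y + c) ^ 2 * (g y - g x) := by
    calc c / (g x + c) ^ 2 * (((g x + c) / (g y + c)) ^ 2 * D)
        = (c / (g x + c) ^ 2 * ((g x + c) / (g y + c)) ^ 2) * D := by ring
      _ = c / (g y + c) ^ 2 * D := by rw [h1]
      _ ≤ c / (g y + c) ^ 2 * (g y - g x) := by
          apply mul_le_mul_of_nonneg_left hD; positivity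
  have key : g y / (g y + c) - g x / (g x + c) - c / (g y + c) ^ 2 * (g y - g x)
      = c * (g y - g x) ^ 2 / ((g x + c) * (g y + c) ^ 2) := by
    field_simp
    ring
  have hpos : 0 ≤ c * (g y - g x) ^ 2 / ((g x + c) * (g y + c) ^ 2) := by positivity
  have hfin : c / (g y + c) ^ 2 * (g y - g x) ≤ g y / (g y + c) - g x / (g x + c) := by
    linarith [key, hpos]
  calc ((g x + c) / (g y + c)) ^ 2 * (c / (g x + c) ^ 2 * D)
      = c / (g x + c) ^ 2 * (((g x + c) / (g y + c)) ^ 2 * D) := by ring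
    _ ≤ g y / (g y + c) - g x / (g x + c) := le_trans hstep hfin
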